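/- Let ρ_AB be a bipartite density operator. For every POVM {F_x}_{x∈X} on A there exists a probability distribution (λ_x)_{x∈X} such that for all x, Tr_A((F_x ⊗ id_B) ρ_AB) ≤ 2^{H_0(A)} · λ_x · ρ_B, where H_0(A) = log₂(rank ρ_A). In other words, the max-accessible-information I_max^acc(B;A) is at most H_0(A). -/

import Mathlib

open scoped Kronecker ComplexOrder
open Matrix

noncomputable section
set_option linter.unusedSectionVars false
set_option maxHeartbeats 1000000

/-- Partial trace over the first (A) register. -/
def ptraceFst {α β : Type*} [Fintype α] (ρ : Matrix (α × β) (α × β) ℂ) : Matrix β β ℂ :=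
  fun i j => ∑ a, ρ (a, i) (a, j)

/-- Partial trace over the second (B) register. -/
def ptraceSnd {α β : Type*} [Fintype β] (ρ : Matrix (α × β) (α × β) ℂ) : Matrix α α ℂ :=
  fun i j => ∑ b, ρ (i, b) (j, b)


variable {α β : Type*} [Fintype α] [Fintype β] [DecidableEq α] [DecidableEq β]

open scoped MatrixOrder in
lemma posSemidef_iff_eq_transpose_mul_self {n : Type*} [Fintype n] [DecidableEq n]
    {A : Matrix n n ℂ} : A.PosSemidef ↔ ∃ B : Matrix n n ℂ, A = Bᴴ * B := by
  refine ⟨fun h => ?_, fun ⟨B, hB⟩ => hB ▸ posSemidef_conjTranspose_mul_self B⟩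
  obtain ⟨B, hB⟩ := CStarAlgebra.nonneg_iff_eq_star_mul_self.mp h.nonneg
  exact ⟨B, hB⟩

lemma ptraceFst_sub (Xm Ym : Matrix (α × β) (α × β) ℂ) :
    ptraceFst (Xm - Ym) = ptraceFst Xm - ptraceFst Ym := by
  ext i j; simp [ptraceFst, Finset.sum_sub_distrib]

lemma ptraceFst_smul (c : ℂ) (Xm : Matrix (α × β) (α × β) ℂ) :
    ptraceFst (c • Xm) = c • ptraceFst Xm := by
  ext i j; simp [ptraceFst, Finset.mul_sum]

lemma ptraceFst_posSemidef {Xm : Matrix (α × β) (α × β) ℂ} (hX : Xm.PosSemidef) :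
    (ptraceFst Xm).PosSemidef := by
  obtain ⟨B, rfl⟩ := posSemidef_iff_eq_transpose_mul_self.mp hX
  have : ptraceFst (Bᴴ * B)
      = (Matrix.of fun (p : (α × β) × α) (j : β) => B p.1 (p.2, j))ᴴ
        * (Matrix.of fun (p : (α × β) × α) (j : β) => B p.1 (p.2, j)) := by
    ext i j
    simp only [ptraceFst, Matrix.mul_apply, conjTranspose_apply, Fintype.sum_prod_type,
      Matrix.of_apply]
    rw [Finset.sum_comm]
    exact Finset.sum_congr rfl fun _ _ => Finset.sum_comm
  rw [this]
  exact posSemidef_conjTranspose_mul_self _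

lemma ptraceSnd_posSemidef {Xm : Matrix (α × β) (α × β) ℂ} (hX : Xm.PosSemidef) :
    (ptraceSnd Xm).PosSemidef := by
  obtain ⟨B, rfl⟩ := posSemidef_iff_eq_transpose_mul_self.mp hX
  have : ptraceSnd (Bᴴ * B)
      = (Matrix.of fun (p : (α × β) × β) (j : α) => B p.1 (j, p.2))ᴴ
        * (Matrix.of fun (p : (α × β) × β) (j : α) => B p.1 (j, p.2)) := by
    ext i j
    simp only [ptraceSnd, Matrix.mul_apply, conjTranspose_apply, Fintype.sum_prod_type,
      Matrix.of_apply]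
    rw [Finset.sum_comm]
    exact Finset.sum_congr rfl fun _ _ => Finset.sum_comm
  rw [this]
  exact posSemidef_conjTranspose_mul_self _

lemma kron_one_mul_kron_one (M N : Matrix α α ℂ) :
    (M ⊗ₖ (1 : Matrix β β ℂ)) * (N ⊗ₖ (1 : Matrix β β ℂ)) = (M * N) ⊗ₖ (1 : Matrix β β ℂ) := by
  rw [← Matrix.mul_kronecker_mul, one_mul]

lemma kron_one_conjTranspose (M : Matrix α α ℂ) :
    (M ⊗ₖ (1 : Matrix β β ℂ))ᴴ = Mᴴ ⊗ₖ (1 : Matrix β β ℂ) := by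
  ext i j
  simp only [conjTranspose_apply, kroneckerMap_apply, star_mul', one_apply, conjTranspose_apply]
  by_cases h : i.2 = j.2
  · simp [h]
  · simp [h, Ne.symm h]

lemma ptraceFst_kron_mul_comm (M : Matrix α α ℂ) (Xm : Matrix (α × β) (α × β) ℂ) :
    ptraceFst ((M ⊗ₖ (1 : Matrix β β ℂ)) * Xm) = ptraceFst (Xm * (M ⊗ₖ (1 : Matrix β β ℂ))) := by
  ext i j
  simp only [ptraceFst, Matrix.mul_apply, Fintype.sum_prod_type, kroneckerMap_apply, one_apply,
    mul_ite, mul_zero, ite_mul, zero_mul, Finset.sum_ite_eq', Finset.sum_ite_eq,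
    Finset.mem_univ, if_true, mul_one, one_mul]
  rw [Finset.sum_comm]
  exact Finset.sum_congr rfl fun a _ => Finset.sum_congr rfl fun a' _ => mul_comm _ _

lemma psd_ptraceFst_kron {ρ : Matrix (α × β) (α × β) ℂ} (hρ : ρ.PosSemidef)
    {K : Matrix α α ℂ} (hK : K.PosSemidef) :
    (ptraceFst ((K ⊗ₖ (1 : Matrix β β ℂ)) * ρ)).PosSemidef := by
  obtain ⟨B, rfl⟩ := posSemidef_iff_eq_transpose_mul_self.mp hK
  rw [← kron_one_mul_kron_one, mul_assoc, ptraceFst_kron_mul_comm, ← kron_one_conjTranspose]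
  exact ptraceFst_posSemidef ((hρ.mul_mul_conjTranspose_same _))

lemma trace_eq_sum_eigs {G : Matrix α α ℂ} (hG : G.IsHermitian) :
    G.trace = ((∑ i, hG.eigenvalues i : ℝ) : ℂ) := by
  conv_lhs => rw [hG.spectral_theorem]
  rw [Unitary.conjStarAlgAut_apply, Matrix.trace_mul_cycle]
  rw [show (star (hG.eigenvectorUnitary : Matrix α α ℂ)) * (hG.eigenvectorUnitary : Matrix α α ℂ)
      = 1 from hG.eigenvectorUnitary.2.1]
  rw [one_mul, Matrix.trace_diagonal]
  push_cast
  rfl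

lemma smul_one_sub_psd {G : Matrix α α ℂ} (hG : G.PosSemidef) :
    (((G.trace.re : ℂ)) • (1 : Matrix α α ℂ) - G).PosSemidef := by
  have hH := hG.1
  have htr : G.trace = ((∑ i, hH.eigenvalues i : ℝ) : ℂ) := trace_eq_sum_eigs hH
  have hre : G.trace.re = ∑ i, hH.eigenvalues i := by rw [htr, Complex.ofReal_re]
  set U : Matrix α α ℂ := (hH.eigenvectorUnitary : Matrix α α ℂ) with hUdef
  have hu : U * Uᴴ = 1 := by
    rw [← Matrix.star_eq_conjTranspose]
    exact hH.eigenvectorUnitary.2.2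
  have hG' : U * diagonal (RCLike.ofReal ∘ hH.eigenvalues) * Uᴴ = G := by
    rw [← Matrix.star_eq_conjTranspose]
    exact hH.spectral_theorem.symm
  have hd : diagonal (fun i => ((G.trace.re : ℂ) - hH.eigenvalues i))
      = (G.trace.re : ℂ) • (1 : Matrix α α ℂ) - diagonal (RCLike.ofReal ∘ hH.eigenvalues) := by
    rw [Matrix.smul_one_eq_diagonal, ← Matrix.diagonal_sub]
    rfl
  have hkey : ((G.trace.re : ℂ)) • (1 : Matrix α α ℂ) - G
      = U * diagonal (fun i => ((G.trace.re : ℂ) - hH.eigenvalues i)) * Uᴴ := by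
    rw [hd, mul_sub, sub_mul, mul_smul_comm, smul_mul_assoc, mul_one, hu, hG']
  rw [hkey]
  refine (posSemidef_diagonal_iff.mpr fun i => ?_).mul_mul_conjTranspose_same U
  rw [show ((G.trace.re : ℂ) - hH.eigenvalues i)
      = ((G.trace.re - hH.eigenvalues i : ℝ) : ℂ) by push_cast; ring]
  rw [Complex.zero_le_real, hre, sub_nonneg]
  exact Finset.single_le_sum (fun j _ => hG.eigenvalues_nonneg j) (Finset.mem_univ i)

def suppProj {G : Matrix α α ℂ} (hH : G.IsHermitian) : Matrix α α ℂ :=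
  (hH.eigenvectorUnitary : Matrix α α ℂ)
    * diagonal (fun i => if hH.eigenvalues i = 0 then (0 : ℂ) else 1)
    * (hH.eigenvectorUnitary : Matrix α α ℂ)ᴴ

lemma suppProj_conjTranspose {G : Matrix α α ℂ} (hH : G.IsHermitian) :
    (suppProj hH)ᴴ = suppProj hH := by
  have hst : star (fun i => if hH.eigenvalues i = 0 then (0 : ℂ) else 1)
      = (fun i => if hH.eigenvalues i = 0 then (0 : ℂ) else 1) := by
    funext i; by_cases h : hH.eigenvalues i = 0 <;> simp [h]
  simp only [suppProj, conjTranspose_mul, conjTranspose_conjTranspose, diagonal_conjTranspose,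
    hst, mul_assoc]

lemma mul_suppProj {G : Matrix α α ℂ} (hH : G.IsHermitian) : G * suppProj hH = G := by
  set U : Matrix α α ℂ := (hH.eigenvectorUnitary : Matrix α α ℂ) with hUdef
  have hu : Uᴴ * U = 1 := by
    rw [← Matrix.star_eq_conjTranspose]
    exact hH.eigenvectorUnitary.2.1
  have hspec : G = U * diagonal (RCLike.ofReal ∘ hH.eigenvalues) * Uᴴ := by
    rw [← Matrix.star_eq_conjTranspose]
    exact hH.spectral_theorem
  have h2 : (U * diagonal (RCLike.ofReal ∘ hH.eigenvalues) * Uᴴ) * suppProj hH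
      = U * diagonal (RCLike.ofReal ∘ hH.eigenvalues) * Uᴴ := by
    rw [suppProj, ← hUdef]
    have assoc : (U * diagonal (RCLike.ofReal ∘ hH.eigenvalues) * Uᴴ)
        * (U * diagonal (fun i => if hH.eigenvalues i = 0 then (0 : ℂ) else 1) * Uᴴ)
        = U * (diagonal (RCLike.ofReal ∘ hH.eigenvalues) * ((Uᴴ * U)
            * diagonal (fun i => if hH.eigenvalues i = 0 then (0 : ℂ) else 1))) * Uᴴ := by
      simp only [mul_assoc]
    rw [assoc, hu, one_mul, diagonal_mul_diagonal]
    congr 2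
    funext i j
    by_cases h : hH.eigenvalues i = 0 <;>
      simp [Matrix.diagonal_apply, h]
  rw [← hspec] at h2
  exact h2

lemma suppProj_idem {G : Matrix α α ℂ} (hH : G.IsHermitian) :
    suppProj hH * suppProj hH = suppProj hH := by
  set U : Matrix α α ℂ := (hH.eigenvectorUnitary : Matrix α α ℂ) with hUdef
  have hu : Uᴴ * U = 1 := by
    rw [← Matrix.star_eq_conjTranspose]
    exact hH.eigenvectorUnitary.2.1
  rw [suppProj, ← hUdef]
  have assoc : (U * diagonal (fun i => if hH.eigenvalues i = 0 then (0 : ℂ) else 1) * Uᴴ)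
      * (U * diagonal (fun i => if hH.eigenvalues i = 0 then (0 : ℂ) else 1) * Uᴴ)
      = U * (diagonal (fun i => if hH.eigenvalues i = 0 then (0 : ℂ) else 1) * ((Uᴴ * U)
          * diagonal (fun i => if hH.eigenvalues i = 0 then (0 : ℂ) else 1))) * Uᴴ := by
    simp only [mul_assoc]
  rw [assoc, hu, one_mul, diagonal_mul_diagonal]
  congr 2
  funext i j
  by_cases h : hH.eigenvalues i = 0 <;>
    simp [Matrix.diagonal_apply, h]

lemma suppProj_trace {G : Matrix α α ℂ} (hH : G.IsHermitian) :
    (suppProj hH).trace = (G.rank : ℂ) := by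
  rw [suppProj, Matrix.trace_mul_cycle]
  rw [show ((hH.eigenvectorUnitary : Matrix α α ℂ)ᴴ * (hH.eigenvectorUnitary : Matrix α α ℂ))
      = 1 by rw [← Matrix.star_eq_conjTranspose]; exact hH.eigenvectorUnitary.2.1]
  rw [one_mul, Matrix.trace_diagonal, hH.rank_eq_card_non_zero_eigs]
  rw [Fintype.card_subtype]
  rw [Finset.card_eq_sum_ones]
  push_cast
  rw [Finset.sum_filter]
  congr 1
  ext i
  by_cases h : hH.eigenvalues i = 0 <;> simp [h]

lemma trace_mul_kron_one (Y : Matrix (α × β) (α × β) ℂ) (M : Matrix α α ℂ) :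
    (Y * (M ⊗ₖ (1 : Matrix β β ℂ))).trace = ((ptraceSnd Y) * M).trace := by
  simp only [Matrix.trace, Matrix.diag, Matrix.mul_apply, ptraceSnd, Fintype.sum_prod_type,
    kroneckerMap_apply, one_apply, mul_ite, mul_one, mul_zero, Finset.sum_ite_eq',
    Finset.sum_ite_eq, Finset.mem_univ, if_true, Finset.sum_mul]
  rw [Finset.sum_comm]
  rw [Finset.sum_comm]
  exact Finset.sum_congr rfl fun _ _ => Finset.sum_comm

lemma trace_ptraceSnd (Y : Matrix (α × β) (α × β) ℂ) :
    (ptraceSnd Y).trace = Y.trace := by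
  simp [Matrix.trace, Matrix.diag, ptraceSnd, Fintype.sum_prod_type]

lemma eq_zero_of_trace_zero {B : Matrix (α × β) (α × β) ℂ}
    (h : (Bᴴ * B).trace = 0) : B = 0 := by
  have key : (Bᴴ * B).trace = ((∑ j, ∑ i, Complex.normSq (B i j) : ℝ) : ℂ) := by
    simp only [Matrix.trace, Matrix.diag, Matrix.mul_apply, conjTranspose_apply]
    push_cast
    refine Finset.sum_congr rfl fun j _ => Finset.sum_congr rfl fun i _ => ?_
    rw [Complex.normSq_eq_conj_mul_self]
    rfl
  rw [key] at h
  norm_cast at h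
  have hz : ∀ i j, Complex.normSq (B i j) = 0 := by
    intro i j
    have h1 := (Finset.sum_eq_zero_iff_of_nonneg (fun j _ => Finset.sum_nonneg
      (fun i _ => Complex.normSq_nonneg _))).mp h j (Finset.mem_univ j)
    exact (Finset.sum_eq_zero_iff_of_nonneg
      (fun i _ => Complex.normSq_nonneg _)).mp h1 i (Finset.mem_univ i)
  ext i j
  exact Complex.normSq_eq_zero.mp (hz i j)

lemma mul_kron_eq_zero {ρ : Matrix (α × β) (α × β) ℂ} (hρ : ρ.PosSemidef)
    {Q : Matrix α α ℂ} (hQh : Qᴴ = Q) (hQi : Q * Q = Q)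
    (htr : ((ptraceSnd ρ) * Q).trace = 0) :
    ρ * (Q ⊗ₖ (1 : Matrix β β ℂ)) = 0 := by
  have hptr := htr
  obtain ⟨B, rfl⟩ := posSemidef_iff_eq_transpose_mul_self.mp hρ
  set K : Matrix (α × β) (α × β) ℂ := Q ⊗ₖ (1 : Matrix β β ℂ) with hK
  have hKK : K * K = K := by rw [hK, kron_one_mul_kron_one, hQi]
  have hKh : Kᴴ = K := by rw [hK, kron_one_conjTranspose, hQh]
  have hBQ : B * K = 0 := by
    apply eq_zero_of_trace_zero
    have t1 : ((B * K)ᴴ * (B * K)).trace = ((Bᴴ * B) * K).trace := by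
      rw [conjTranspose_mul, hKh]
      rw [show (K * Bᴴ) * (B * K) = K * (Bᴴ * B) * K by simp only [mul_assoc]]
      rw [Matrix.trace_mul_cycle]
      rw [show K * K * (Bᴴ * B) = (K * K) * (Bᴴ * B) by simp only [mul_assoc]]
      rw [hKK, Matrix.trace_mul_comm]
    rw [t1, trace_mul_kron_one, hptr]
  calc Bᴴ * B * K = Bᴴ * (B * K) := by rw [mul_assoc]
    _ = 0 := by rw [hBQ, mul_zero]

lemma sub_kron_one (M N : Matrix α α ℂ) :
    (M - N) ⊗ₖ (1 : Matrix β β ℂ) = M ⊗ₖ 1 - N ⊗ₖ 1 := by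
  ext i j
  simp [kroneckerMap_apply, sub_mul]

lemma psd_trace_re_nonneg {G : Matrix α α ℂ} (hG : G.PosSemidef) : 0 ≤ G.trace.re := by
  rw [trace_eq_sum_eigs hG.1, Complex.ofReal_re]
  exact Finset.sum_nonneg fun i _ => hG.eigenvalues_nonneg i

lemma real_smul_matrix (c : ℝ) (M : Matrix β β ℂ) : c • M = ((c : ℂ)) • M := by
  ext i j
  simp [Complex.real_smul]

/-- For every POVM `{F_x}` on `A` there is a probability distribution `(λ_x)` with
`Tr_A((F_x ⊗ id) ρ_AB) ≤ 2^{H₀(A)} λ_x ρ_B` for all `x`, where `H₀(A) = log₂ rank ρ_A`;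
i.e. `I_max^acc(B;A) ≤ H₀(A)`. -/
theorem stmt3 {a b : ℕ} {X : Type} [Fintype X]
    (ρ : Matrix (Fin a × Fin b) (Fin a × Fin b) ℂ) (hρ : ρ.PosSemidef) (htr : ρ.trace = 1)
    (F : X → Matrix (Fin a) (Fin a) ℂ) (hF : ∀ x, (F x).PosSemidef) (hsum : ∑ x, F x = 1) :
    ∃ lam : X → ℝ, (∀ x, 0 ≤ lam x) ∧ ∑ x, lam x = 1 ∧
      ∀ x, (((2 : ℝ) ^ (Real.logb 2 ((ptraceSnd ρ).rank : ℝ)) * lam x) • ptraceFst ρ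
            - ptraceFst ((F x ⊗ₖ (1 : Matrix (Fin b) (Fin b) ℂ)) * ρ)).PosSemidef := by
  set ρA := ptraceSnd ρ with hρAdef
  have hA : ρA.PosSemidef := ptraceSnd_posSemidef hρ
  have hAH : ρA.IsHermitian := hA.1
  set P := suppProj hAH with hPdef
  have hPh : Pᴴ = P := suppProj_conjTranspose hAH
  have hPi : P * P = P := suppProj_idem hAH
  have hAP : ρA * P = ρA := mul_suppProj hAH
  have hPtr : P.trace = (ρA.rank : ℂ) := suppProj_trace hAH
  have htrA : ρA.trace = 1 := by rw [hρAdef, trace_ptraceSnd, htr]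
  have hrank : 0 < ρA.rank := by
    by_contra h
    push_neg at h
    have h0 : ρA.rank = 0 := Nat.le_zero.mp h
    rw [hAH.rank_eq_card_non_zero_eigs] at h0
    have hall : ∀ i, hAH.eigenvalues i = 0 := by
      intro i
      by_contra hne
      exact (Fintype.card_eq_zero_iff.mp h0).elim ⟨i, hne⟩
    have h1 : ρA.trace = 0 := by
      rw [trace_eq_sum_eigs hAH]
      simp [hall]
    rw [htrA] at h1
    exact one_ne_zero h1
  have hr0 : ((ρA.rank : ℝ)) ≠ 0 := by positivity
  -- Q = 1 - P
  set Q : Matrix (Fin a) (Fin a) ℂ := 1 - P with hQdef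
  have hQh : Qᴴ = Q := by rw [hQdef, conjTranspose_sub, conjTranspose_one, hPh]
  have hQi : Q * Q = Q := by
    rw [hQdef, sub_mul, one_mul, mul_sub, mul_one, hPi, sub_self, sub_zero]
  have hQtr : (ρA * Q).trace = 0 := by
    rw [hQdef, mul_sub, mul_one, hAP, sub_self, Matrix.trace_zero]
  have hzero : ρ * (Q ⊗ₖ (1 : Matrix (Fin b) (Fin b) ℂ)) = 0 :=
    mul_kron_eq_zero hρ hQh hQi (by rw [← hρAdef]; exact hQtr)
  have hρP : ρ * (P ⊗ₖ (1 : Matrix (Fin b) (Fin b) ℂ)) = ρ := by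
    have : P = 1 - Q := by rw [hQdef, sub_sub_cancel]
    rw [this, sub_kron_one, Matrix.one_kronecker_one, mul_sub, mul_one, hzero, sub_zero]
  have hPρ : (P ⊗ₖ (1 : Matrix (Fin b) (Fin b) ℂ)) * ρ = ρ := by
    have := congrArg conjTranspose hρP
    rwa [conjTranspose_mul, kron_one_conjTranspose, hPh, hρ.1.eq] at this
  -- the distribution
  have hGpsd : ∀ x, (P * F x * P).PosSemidef := by
    intro x
    have := (hF x).mul_mul_conjTranspose_same P
    rwa [hPh] at this
  refine ⟨fun x => ((P * F x * P).trace.re) / (ρA.rank : ℝ), ?_, ?_, ?_⟩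
  · intro x
    exact div_nonneg (psd_trace_re_nonneg (hGpsd x)) (by positivity)
  · rw [← Finset.sum_div]
    have h1 : ∑ x, ((P * F x * P).trace.re) = (∑ x, (P * F x * P).trace).re := by
      rw [Complex.re_sum]
    have h2 : ∑ x, (P * F x * P).trace = P.trace := by
      rw [← Matrix.trace_sum]
      congr 1
      rw [← Finset.sum_mul, ← Finset.mul_sum, hsum, mul_one, hPi]
    rw [h1, h2, hPtr, Complex.natCast_re, div_self hr0]
  · intro x
    have hpow : (2 : ℝ) ^ (Real.logb 2 ((ptraceSnd ρ).rank : ℝ)) = (ρA.rank : ℝ) := by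
      rw [← hρAdef]
      exact Real.rpow_logb (by norm_num) (by norm_num) (by exact_mod_cast hrank)
    have hcoef : (2 : ℝ) ^ (Real.logb 2 ((ptraceSnd ρ).rank : ℝ))
        * (((P * F x * P).trace.re) / (ρA.rank : ℝ)) = (P * F x * P).trace.re := by
      rw [hpow, mul_comm, div_mul_cancel₀ _ hr0]
    set G : Matrix (Fin a) (Fin a) ℂ := P * F x * P with hGdef
    have step1 : ptraceFst ((G ⊗ₖ (1 : Matrix (Fin b) (Fin b) ℂ)) * ρ)
        = ptraceFst ((F x ⊗ₖ (1 : Matrix (Fin b) (Fin b) ℂ)) * ρ) := by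
      have e1 : (G ⊗ₖ (1 : Matrix (Fin b) (Fin b) ℂ))
          = (P ⊗ₖ (1 : Matrix (Fin b) (Fin b) ℂ)) * ((F x * P) ⊗ₖ 1) := by
        rw [hGdef, kron_one_mul_kron_one, mul_assoc]
      have e2 : ((F x * P) ⊗ₖ (1 : Matrix (Fin b) (Fin b) ℂ))
          = (F x ⊗ₖ (1 : Matrix (Fin b) (Fin b) ℂ)) * (P ⊗ₖ 1) := by
        rw [kron_one_mul_kron_one]
      rw [e1, mul_assoc, ptraceFst_kron_mul_comm, mul_assoc, hρP, e2, mul_assoc, hPρ]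
    have e3 : ((((G.trace.re : ℂ)) • (1 : Matrix (Fin a) (Fin a) ℂ) - G)
          ⊗ₖ (1 : Matrix (Fin b) (Fin b) ℂ)) * ρ
        = ((G.trace.re : ℂ)) • ρ - (G ⊗ₖ (1 : Matrix (Fin b) (Fin b) ℂ)) * ρ := by
      rw [sub_kron_one, Matrix.smul_kronecker, Matrix.one_kronecker_one, sub_mul,
        smul_mul_assoc, one_mul]
    beta_reduce
    rw [hcoef, real_smul_matrix, ← step1, ← ptraceFst_smul, ← ptraceFst_sub, ← e3]
    exact psd_ptraceFst_kron hρ (smul_one_sub_psd (hGpsd x))
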